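/- arXiv:2404.04775 — 5 statements merged into one kernel-verified Lean document; each statement's English description precedes it below -/
import Mathlib

section
/- Let A, G, Y be random variables taking values in finite sets, and let C be a conditioning random variable. Suppose (i) P(A = a | Y, C) = P(A = a | C) for all a (treatment unconfoundedness), and (ii) P(G = g | A, Y, C) = P(G = g | A, C) for all g (network unconfoundedness). Let h be a deterministic function and define the exposure E = h(A, G). Then P(E = e | Y, C) = P(E = e | C) for all e; that is, the exposure E is conditionally independent of Y given C. -/
open Classical

/-- Probability of an event under a weight function on a finite sample space. -/
noncomputable def Pr {Ω : Type*} [Fintype Ω] (w : Ω → ℝ) (p : Ω → Prop) : ℝ :=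
  ∑ ω, if p ω then w ω else 0

/-- Conditional probability P(p | q). -/
noncomputable def CPr {Ω : Type*} [Fintype Ω] (w : Ω → ℝ) (p q : Ω → Prop) : ℝ :=
  Pr w (fun ω => p ω ∧ q ω) / Pr w q

private lemma Pr_congr {Ω : Type*} [Fintype Ω] (w : Ω → ℝ) {p q : Ω → Prop}
    (h : ∀ ω, p ω ↔ q ω) : Pr w p = Pr w q := by
  unfold Pr
  exact Finset.sum_congr rfl fun ω _ => by simp [h ω]

private lemma Pr_mono {Ω : Type*} [Fintype Ω] {w : Ω → ℝ} (hw : ∀ ω, 0 ≤ w ω)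
    {p q : Ω → Prop} (h : ∀ ω, p ω → q ω) : Pr w p ≤ Pr w q := by
  unfold Pr
  refine Finset.sum_le_sum fun ω _ => ?_
  by_cases hp : p ω
  · simp [hp, h ω hp]
  · simp only [if_neg hp]
    split_ifs
    · exact hw ω
    · exact le_refl 0
private lemma Pr_decomp {Ω δ : Type*} [Fintype Ω] (w : Ω → ℝ) (F : Ω → δ)
    (P : δ → Prop) (S : Ω → Prop) :
    Pr w (fun ω => P (F ω) ∧ S ω)
      = ∑ p ∈ Finset.univ.image F,
          if P p then Pr w (fun ω => F ω = p ∧ S ω) else 0 := by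
  classical
  unfold Pr
  rw [← Finset.sum_fiberwise_of_maps_to
    (g := F) (fun ω _ => Finset.mem_image_of_mem F (Finset.mem_univ ω))]
  refine Finset.sum_congr rfl fun p hp => ?_
  by_cases hP : P p
  · rw [if_pos hP]
    refine Eq.trans (Finset.sum_congr rfl fun i hi => ?_)
      (Finset.sum_subset (Finset.subset_univ _) fun x _ hx => ?_)
    · rw [Finset.mem_filter] at hi
      by_cases hS : S i <;> simp [hi.2, hS, hP]
    · rw [Finset.mem_filter] at hx
      rw [if_neg]
      intro hc
      exact hx ⟨Finset.mem_univ x, hc.1⟩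
  · rw [if_neg hP]
    refine Finset.sum_eq_zero fun ω hω => ?_
    rw [Finset.mem_filter] at hω
    rw [if_neg]
    rintro ⟨hPF, _⟩
    exact hP (hω.2 ▸ hPF)

/-- Exposure unconfoundedness: if the treatment `A` and the network `G` are
unconfounded given `C`, then the exposure `E = h(A, G)` is unconfounded given `C`. -/
theorem exposure_unconfoundedness
    {Ω α γ β κ η : Type*} [Fintype Ω]
    (w : Ω → ℝ) (hw : ∀ ω, 0 ≤ w ω) (hsum : ∑ ω, w ω = 1)
    (A : Ω → α) (G : Ω → γ) (Y : Ω → β) (C : Ω → κ) (h : α → γ → η)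
    (hpos : ∀ (a : α) (g : γ) (y : β) (c : κ),
      0 < Pr w (fun ω => A ω = a ∧ G ω = g ∧ Y ω = y ∧ C ω = c))
    (hA : ∀ (a : α) (y : β) (c : κ),
      CPr w (fun ω => A ω = a) (fun ω => Y ω = y ∧ C ω = c)
        = CPr w (fun ω => A ω = a) (fun ω => C ω = c))
    (hG : ∀ (g : γ) (a : α) (y : β) (c : κ),
      CPr w (fun ω => G ω = g) (fun ω => A ω = a ∧ Y ω = y ∧ C ω = c)
        = CPr w (fun ω => G ω = g) (fun ω => A ω = a ∧ C ω = c))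
    (e : η) (y : β) (c : κ) :
    CPr w (fun ω => h (A ω) (G ω) = e) (fun ω => Y ω = y ∧ C ω = c)
      = CPr w (fun ω => h (A ω) (G ω) = e) (fun ω => C ω = c) := by
  classical
  rcases isEmpty_or_nonempty Ω with hΩ | ⟨⟨ω0⟩⟩
  · simp [CPr, Pr, Finset.univ_eq_empty]
  -- per-pair chain rule identity
  have key : ∀ (a : α) (g : γ),
      Pr w (fun ω => (A ω = a ∧ G ω = g) ∧ Y ω = y ∧ C ω = c)
          / Pr w (fun ω => Y ω = y ∧ C ω = c)
        = Pr w (fun ω => (A ω = a ∧ G ω = g) ∧ C ω = c)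
          / Pr w (fun ω => C ω = c) := by
    intro a g
    have h4 := hpos a g y c
    have hAYC : 0 < Pr w (fun ω => A ω = a ∧ Y ω = y ∧ C ω = c) :=
      lt_of_lt_of_le h4 (Pr_mono hw (by rintro ω ⟨ha, hg, hy, hc⟩; exact ⟨ha, hy, hc⟩))
    have hYC : 0 < Pr w (fun ω => Y ω = y ∧ C ω = c) :=
      lt_of_lt_of_le h4 (Pr_mono hw (by rintro ω ⟨ha, hg, hy, hc⟩; exact ⟨hy, hc⟩))
    have hAC : 0 < Pr w (fun ω => A ω = a ∧ C ω = c) :=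
      lt_of_lt_of_le h4 (Pr_mono hw (by rintro ω ⟨ha, hg, hy, hc⟩; exact ⟨ha, hc⟩))
    have hC : 0 < Pr w (fun ω => C ω = c) :=
      lt_of_lt_of_le h4 (Pr_mono hw (by rintro ω ⟨ha, hg, hy, hc⟩; exact hc))
    have hGe := hG g a y c
    have hAe := hA a y c
    unfold CPr at hGe hAe
    have e1 : Pr w (fun ω => (A ω = a ∧ G ω = g) ∧ Y ω = y ∧ C ω = c)
        = Pr w (fun ω => G ω = g ∧ A ω = a ∧ Y ω = y ∧ C ω = c) :=
      Pr_congr w (by tauto)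
    have e2 : Pr w (fun ω => (A ω = a ∧ G ω = g) ∧ C ω = c)
        = Pr w (fun ω => G ω = g ∧ A ω = a ∧ C ω = c) :=
      Pr_congr w (by tauto)
    have e3 : Pr w (fun ω => A ω = a ∧ Y ω = y ∧ C ω = c)
        = Pr w (fun ω => A ω = a ∧ (Y ω = y ∧ C ω = c)) := Pr_congr w (by tauto)
    rw [e1, e2]
    have lhs : Pr w (fun ω => G ω = g ∧ A ω = a ∧ Y ω = y ∧ C ω = c)
          / Pr w (fun ω => Y ω = y ∧ C ω = c)
        = (Pr w (fun ω => G ω = g ∧ A ω = a ∧ Y ω = y ∧ C ω = c)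
            / Pr w (fun ω => A ω = a ∧ Y ω = y ∧ C ω = c))
          * (Pr w (fun ω => A ω = a ∧ (Y ω = y ∧ C ω = c))
            / Pr w (fun ω => Y ω = y ∧ C ω = c)) := by
      rw [← e3]; field_simp
    have rhs : Pr w (fun ω => G ω = g ∧ A ω = a ∧ C ω = c)
          / Pr w (fun ω => C ω = c)
        = (Pr w (fun ω => G ω = g ∧ A ω = a ∧ C ω = c)
            / Pr w (fun ω => A ω = a ∧ C ω = c))
          * (Pr w (fun ω => A ω = a ∧ C ω = c)
            / Pr w (fun ω => C ω = c)) := by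
      field_simp
    rw [lhs, rhs, hGe, hAe]
  -- assemble
  have hYC : 0 < Pr w (fun ω => Y ω = y ∧ C ω = c) :=
    lt_of_lt_of_le (hpos (A ω0) (G ω0) y c)
      (Pr_mono hw (by rintro ω ⟨ha, hg, hy, hc⟩; exact ⟨hy, hc⟩))
  have hC : 0 < Pr w (fun ω => C ω = c) :=
    lt_of_lt_of_le (hpos (A ω0) (G ω0) y c)
      (Pr_mono hw (by rintro ω ⟨ha, hg, hy, hc⟩; exact hc))
  unfold CPr
  rw [Pr_decomp w (fun ω => (A ω, G ω)) (fun p => h p.1 p.2 = e)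
      (fun ω => Y ω = y ∧ C ω = c),
    Pr_decomp w (fun ω => (A ω, G ω)) (fun p => h p.1 p.2 = e)
      (fun ω => C ω = c),
    Finset.sum_div, Finset.sum_div]
  refine Finset.sum_congr rfl fun p _ => ?_
  by_cases hP : h p.1 p.2 = e
  · rw [if_pos hP, if_pos hP]
    have eL : Pr w (fun ω => (A ω, G ω) = p ∧ Y ω = y ∧ C ω = c)
        = Pr w (fun ω => (A ω = p.1 ∧ G ω = p.2) ∧ Y ω = y ∧ C ω = c) :=
      Pr_congr w (by intro ω; rw [Prod.ext_iff])
    have eR : Pr w (fun ω => (A ω, G ω) = p ∧ C ω = c)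
        = Pr w (fun ω => (A ω = p.1 ∧ G ω = p.2) ∧ C ω = c) :=
      Pr_congr w (by intro ω; rw [Prod.ext_iff])
    rw [eL, eR]
    exact key p.1 p.2
  · rw [if_neg hP, if_neg hP, zero_div, zero_div]
end

section
/- Let I₂ be a nonempty finite set of matched triples (t_e, t_{u1}, t_{u2}). Suppose Y_t(e) = β_0 + β_1·e + β_2·t + ε_t(e) with mean-zero errors, and the matching satisfies |Σ_{I₂}(t_e − (t_{u1}+t_{u2})/2)| ≤ δ|I₂|. Then the 1-2 matching estimator τ̂ = (1/|I₂|)·Σ_{I₂} (Y_{t_e}(1) − (Y_{t_{u1}}(0)+Y_{t_{u2}}(0))/2) satisfies |E[τ̂] − β_1| ≤ δ|β_2|. -/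
open MeasureTheory

/-- Time-only bias bound for the Matching 1-2 estimator: each exposed time is matched
to two unexposed times, the counterfactual is the average of the two, and under the
average time-balance constraint the bias is at most δ|β₂|. -/
theorem matching12_bias_time_only
    {Ω : Type*} [MeasurableSpace Ω] (μ : Measure Ω) [IsProbabilityMeasure μ]
    (I₂ : Finset (ℝ × ℝ × ℝ)) (hI : I₂.Nonempty)
    (β0 β1 β2 δ : ℝ) (hδ : 0 ≤ δ)
    (ε : ℝ → ℝ → Ω → ℝ)
    (hint : ∀ t e, Integrable (ε t e) μ)
    (hmean : ∀ t e, ∫ ω, ε t e ω ∂μ = 0)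
    (Y : ℝ → ℝ → Ω → ℝ)
    (hY : ∀ t e ω, Y t e ω = β0 + β1 * e + β2 * t + ε t e ω)
    (hbal : |∑ q ∈ I₂, (q.1 - (q.2.1 + q.2.2) / 2)| ≤ δ * I₂.card) :
    |(∫ ω, (I₂.card : ℝ)⁻¹ *
        ∑ q ∈ I₂, (Y q.1 1 ω - (Y q.2.1 0 ω + Y q.2.2 0 ω) / 2) ∂μ) - β1|
      ≤ δ * |β2| := by
  have hcard : (0 : ℝ) < I₂.card := by exact_mod_cast hI.card_pos
  set n : ℝ := (I₂.card : ℝ)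
  -- each summand decomposes
  have hterm : ∀ q : ℝ × ℝ × ℝ, ∀ ω,
      Y q.1 1 ω - (Y q.2.1 0 ω + Y q.2.2 0 ω) / 2
        = (β1 + β2 * (q.1 - (q.2.1 + q.2.2) / 2))
          + (ε q.1 1 ω - (ε q.2.1 0 ω + ε q.2.2 0 ω) / 2) := by
    intro q ω; simp only [hY]; ring
  have hintq : ∀ q : ℝ × ℝ × ℝ,
      Integrable (fun ω => Y q.1 1 ω - (Y q.2.1 0 ω + Y q.2.2 0 ω) / 2) μ := by
    intro q
    have : Integrable (fun ω => (β1 + β2 * (q.1 - (q.2.1 + q.2.2) / 2))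
          + (ε q.1 1 ω - (ε q.2.1 0 ω + ε q.2.2 0 ω) / 2)) μ := by
      apply (integrable_const _).add
      exact ((hint q.1 1).sub (((hint q.2.1 0).add (hint q.2.2 0)).div_const 2))
    exact this.congr (Filter.Eventually.of_forall fun ω => (hterm q ω).symm)
  have hIq : ∀ q : ℝ × ℝ × ℝ,
      ∫ ω, (Y q.1 1 ω - (Y q.2.1 0 ω + Y q.2.2 0 ω) / 2) ∂μ
        = β1 + β2 * (q.1 - (q.2.1 + q.2.2) / 2) := by
    intro q
    have h2 : Integrable (fun ω => (ε q.2.1 0 ω + ε q.2.2 0 ω) / 2) μ :=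
      ((hint q.2.1 0).add (hint q.2.2 0)).div_const 2
    have h1 : Integrable (fun ω => ε q.1 1 ω - (ε q.2.1 0 ω + ε q.2.2 0 ω) / 2) μ :=
      (hint q.1 1).sub h2
    rw [integral_congr_ae (Filter.Eventually.of_forall (hterm q))]
    rw [integral_add (integrable_const _) h1, integral_sub (hint q.1 1) h2,
      integral_div, integral_add (hint q.2.1 0) (hint q.2.2 0)]
    simp [hmean]
  have hint_eq : (∫ ω, n⁻¹ *
        ∑ q ∈ I₂, (Y q.1 1 ω - (Y q.2.1 0 ω + Y q.2.2 0 ω) / 2) ∂μ)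
      = n⁻¹ * ∑ q ∈ I₂, (β1 + β2 * (q.1 - (q.2.1 + q.2.2) / 2)) := by
    rw [integral_const_mul, integral_finset_sum _ (fun q _ => hintq q)]
    congr 1
    exact Finset.sum_congr rfl fun q _ => hIq q
  rw [hint_eq]
  rw [Finset.sum_add_distrib, Finset.sum_const, ← Finset.mul_sum]
  have : n⁻¹ * ((I₂.card : ℕ) • β1 + β2 * ∑ q ∈ I₂, (q.1 - (q.2.1 + q.2.2) / 2)) - β1
      = n⁻¹ * (β2 * ∑ q ∈ I₂, (q.1 - (q.2.1 + q.2.2) / 2)) := by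
    have : n ≠ 0 := ne_of_gt hcard
    rw [nsmul_eq_mul, mul_add, ← mul_assoc, inv_mul_cancel₀ this, one_mul]; ring
  rw [this, abs_mul, abs_mul, abs_inv, abs_of_pos hcard]
  calc n⁻¹ * (|β2| * |∑ q ∈ I₂, (q.1 - (q.2.1 + q.2.2) / 2)|)
      ≤ n⁻¹ * (|β2| * (δ * n)) := by
        apply mul_le_mul_of_nonneg_left _ (inv_nonneg.2 hcard.le)
        exact mul_le_mul_of_nonneg_left hbal (abs_nonneg _)
    _ = δ * |β2| := by field_simp
end

section
/- Let I₁ be a finite set of pairs (t_e,t_u) and I₂ a finite set of triples (t_e,t_{u1},t_{u2}) with |I₁| + |I₂| = |I| > 0. Suppose Y_t(e) = β_0 + β_1 e + β_2 t + ⟨β_3, W_t⟩ + ε_t(e) with mean-zero errors, and the combined balance constraints hold: |Σ_{I₁}(t_e−t_u) + Σ_{I₂}(t_e − (t_{u1}+t_{u2})/2)| ≤ δ|I|, and componentwise |Σ_{I₁}(W_{t_e}−W_{t_u}) + Σ_{I₂}(W_{t_e} − (W_{t_{u1}}+W_{t_{u2}})/2)| ≤ δ'|I|·1. Then the combined 1-1/2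 matching estimator τ̂ = (1/|I|)·[Σ_{I₁}(Y_{t_e} − Y_{t_u}) + Σ_{I₂}(Y_{t_e} − (Y_{t_{u1}}+Y_{t_{u2}})/2)] satisfies |E[τ̂] − β_1| ≤ δ|β_2| + δ'‖β_3‖₁. -/
open MeasureTheory

/-- Bias bound for the hybrid Matching 1-1/2 estimator: matching each exposed period to
one or two unexposed periods, under combined balance constraints for time and covariates,
the bias is at most δ|β₂| + δ'‖β₃‖₁. -/
theorem matching112_bias_linear
    {Ω : Type*} [MeasurableSpace Ω] (μ : Measure Ω) [IsProbabilityMeasure μ]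
    {pW : ℕ}
    (I₁ : Finset (ℝ × ℝ)) (I₂ : Finset (ℝ × ℝ × ℝ))
    (hn : 0 < I₁.card + I₂.card)
    (β0 β1 β2 : ℝ) (β3 : Fin pW → ℝ) (δ δ' : ℝ) (hδ : 0 ≤ δ) (hδ' : 0 ≤ δ')
    (W : ℝ → Fin pW → ℝ)
    (ε : ℝ → ℝ → Ω → ℝ)
    (hint : ∀ t e, Integrable (ε t e) μ)
    (hmean : ∀ t e, ∫ ω, ε t e ω ∂μ = 0)
    (Y : ℝ → ℝ → Ω → ℝ)
    (hY : ∀ t e ω, Y t e ω = β0 + β1 * e + β2 * t + (∑ i, β3 i * W t i) + ε t e ω)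
    (hbal_t : |(∑ p ∈ I₁, (p.1 - p.2)) + ∑ q ∈ I₂, (q.1 - (q.2.1 + q.2.2) / 2)|
        ≤ δ * (I₁.card + I₂.card))
    (hbal_W : ∀ i, |(∑ p ∈ I₁, (W p.1 i - W p.2 i))
          + ∑ q ∈ I₂, (W q.1 i - (W q.2.1 i + W q.2.2 i) / 2)|
        ≤ δ' * (I₁.card + I₂.card)) :
    |(∫ ω, ((I₁.card + I₂.card : ℕ) : ℝ)⁻¹ *
        ((∑ p ∈ I₁, (Y p.1 1 ω - Y p.2 0 ω))
          + ∑ q ∈ I₂, (Y q.1 1 ω - (Y q.2.1 0 ω + Y q.2.2 0 ω) / 2)) ∂μ) - β1|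
      ≤ δ * |β2| + δ' * ∑ i, |β3 i| := by

  classical
  have hnR : (0:ℝ) < ((I₁.card + I₂.card : ℕ) : ℝ) := by exact_mod_cast hn
  set n : ℝ := ((I₁.card + I₂.card : ℕ) : ℝ) with hndef
  have hne : n ≠ 0 := ne_of_gt hnR
  set St : ℝ := (∑ p ∈ I₁, (p.1 - p.2)) + ∑ q ∈ I₂, (q.1 - (q.2.1 + q.2.2) / 2) with hStdef
  set SW : Fin pW → ℝ := fun i => (∑ p ∈ I₁, (W p.1 i - W p.2 i))
      + ∑ q ∈ I₂, (W q.1 i - (W q.2.1 i + W q.2.2 i) / 2) with hSWdef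
  set T : ℝ := ∑ i, β3 i * SW i with hTdef
  set g : Ω → ℝ := fun ω => (∑ p ∈ I₁, (ε p.1 1 ω - ε p.2 0 ω))
      + ∑ q ∈ I₂, (ε q.1 1 ω - (ε q.2.1 0 ω + ε q.2.2 0 ω) / 2) with hgdef
  have hSt' : |St| ≤ δ * n := by rw [hndef]; push_cast; exact hbal_t
  have hSW' : ∀ i, |SW i| ≤ δ' * n := by
    intro i; rw [hndef]; push_cast; simpa [hSWdef] using hbal_W i
  have hgint : Integrable g μ := by
    apply Integrable.add
    · exact integrable_finset_sum _ fun p _ => (hint p.1 1).sub (hint p.2 0)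
    · exact integrable_finset_sum _ fun q _ =>
        (hint q.1 1).sub (((hint q.2.1 0).add (hint q.2.2 0)).div_const 2)
  have hgmean : ∫ ω, g ω ∂μ = 0 := by
    rw [hgdef]
    rw [integral_add (integrable_finset_sum _ fun p _ => (hint p.1 1).sub (hint p.2 0))
      (integrable_finset_sum _ fun q _ =>
        (hint q.1 1).sub (((hint q.2.1 0).add (hint q.2.2 0)).div_const 2)),
      integral_finset_sum _ (fun p _ => (hint p.1 1).sub (hint p.2 0)),
      integral_finset_sum _ (fun q _ =>
        (hint q.1 1).sub (((hint q.2.1 0).add (hint q.2.2 0)).div_const 2))]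
    have h1 : ∀ p ∈ I₁, (∫ ω, (ε p.1 1 ω - ε p.2 0 ω) ∂μ) = 0 := by
      intro p _
      rw [integral_sub (hint p.1 1) (hint p.2 0), hmean, hmean]; ring
    have h2 : ∀ q ∈ I₂, (∫ ω, (ε q.1 1 ω - (ε q.2.1 0 ω + ε q.2.2 0 ω) / 2) ∂μ) = 0 := by
      intro q _
      have hb : Integrable (fun ω => (ε q.2.1 0 ω + ε q.2.2 0 ω) / 2) μ :=
        ((hint q.2.1 0).add (hint q.2.2 0)).div_const 2
      rw [integral_sub (hint q.1 1) hb, hmean]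
      have : (∫ ω, (ε q.2.1 0 ω + ε q.2.2 0 ω) / 2 ∂μ) = 0 := by
        rw [integral_div, integral_add (hint q.2.1 0) (hint q.2.2 0), hmean, hmean]
        ring
      rw [this]; ring
    rw [Finset.sum_congr rfl h1, Finset.sum_congr rfl h2]
    simp
  have h1 : ∀ ω, ∀ p ∈ I₁, Y p.1 1 ω - Y p.2 0 ω
      = β1 + β2 * (p.1 - p.2) + (∑ i, β3 i * (W p.1 i - W p.2 i))
        + (ε p.1 1 ω - ε p.2 0 ω) := by
    intro ω p _
    have csub : ∑ i, β3 i * (W p.1 i - W p.2 i)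
        = (∑ i, β3 i * W p.1 i) - ∑ i, β3 i * W p.2 i := by
      rw [← Finset.sum_sub_distrib]
      exact Finset.sum_congr rfl fun i _ => by ring
    rw [hY, hY, csub]; ring
  have h2 : ∀ ω, ∀ q ∈ I₂, Y q.1 1 ω - (Y q.2.1 0 ω + Y q.2.2 0 ω) / 2
      = β1 + β2 * (q.1 - (q.2.1 + q.2.2) / 2)
        + (∑ i, β3 i * (W q.1 i - (W q.2.1 i + W q.2.2 i) / 2))
        + (ε q.1 1 ω - (ε q.2.1 0 ω + ε q.2.2 0 ω) / 2) := by
    intro ω q _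
    have csum : ∑ i, β3 i * (W q.1 i - (W q.2.1 i + W q.2.2 i) / 2)
        = (∑ i, β3 i * W q.1 i)
          - ((∑ i, β3 i * W q.2.1 i) + ∑ i, β3 i * W q.2.2 i) / 2 := by
      rw [← Finset.sum_add_distrib, Finset.sum_div, ← Finset.sum_sub_distrib]
      exact Finset.sum_congr rfl fun i _ => by ring
    rw [hY, hY, hY, csum]; ring
  have hsw : (∑ p ∈ I₁, ∑ i, β3 i * (W p.1 i - W p.2 i))
      + (∑ q ∈ I₂, ∑ i, β3 i * (W q.1 i - (W q.2.1 i + W q.2.2 i) / 2)) = T := by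
    rw [hTdef]
    rw [Finset.sum_comm (s := I₁), Finset.sum_comm (s := I₂)]
    simp only [hSWdef, mul_add, Finset.mul_sum, Finset.sum_add_distrib]
  have key : ∀ ω, (∑ p ∈ I₁, (Y p.1 1 ω - Y p.2 0 ω))
      + (∑ q ∈ I₂, (Y q.1 1 ω - (Y q.2.1 0 ω + Y q.2.2 0 ω) / 2))
      = n * β1 + β2 * St + T + g ω := by
    intro ω
    rw [Finset.sum_congr rfl (h1 ω), Finset.sum_congr rfl (h2 ω)]
    simp only [Finset.sum_add_distrib, Finset.sum_const, nsmul_eq_mul, ← Finset.mul_sum]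
    rw [hgdef, hStdef, ← hsw, hndef]
    push_cast
    ring
  have hint' : (∫ ω, n⁻¹ * ((∑ p ∈ I₁, (Y p.1 1 ω - Y p.2 0 ω))
      + ∑ q ∈ I₂, (Y q.1 1 ω - (Y q.2.1 0 ω + Y q.2.2 0 ω) / 2)) ∂μ)
      = n⁻¹ * (n * β1 + β2 * St + T) := by
    simp only [key]
    rw [integral_const_mul,
      integral_add (integrable_const (n * β1 + β2 * St + T)) hgint,
      integral_const, hgmean]
    simp
  rw [hint']
  have heq : n⁻¹ * (n * β1 + β2 * St + T) - β1 = n⁻¹ * (β2 * St + T) := by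
    field_simp
    ring
  rw [heq, abs_mul, abs_inv, abs_of_pos hnR]
  have hbound : |β2 * St + T| ≤ n * (δ * |β2| + δ' * ∑ i, |β3 i|) := by
    calc |β2 * St + T| ≤ |β2| * |St| + ∑ i, |β3 i * SW i| := by
          refine (abs_add_le _ _).trans (add_le_add (le_of_eq (abs_mul _ _)) ?_)
          exact Finset.abs_sum_le_sum_abs _ _
      _ ≤ |β2| * (δ * n) + ∑ i, |β3 i| * (δ' * n) := by
          refine add_le_add (mul_le_mul_of_nonneg_left hSt' (abs_nonneg _)) ?_
          refine Finset.sum_le_sum fun i _ => ?_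
          rw [abs_mul]
          exact mul_le_mul_of_nonneg_left (hSW' i) (abs_nonneg _)
      _ = |β2| * (δ * n) + (∑ i, |β3 i|) * (δ' * n) := by rw [← Finset.sum_mul]
      _ = n * (δ * |β2| + δ' * ∑ i, |β3 i|) := by ring
  calc n⁻¹ * |β2 * St + T| ≤ n⁻¹ * (n * (δ * |β2| + δ' * ∑ i, |β3 i|)) :=
        mul_le_mul_of_nonneg_left hbound (inv_nonneg.2 hnR.le)
    _ = δ * |β2| + δ' * ∑ i, |β3 i| := by field_simp
end

section
/- Let I₁ and I₂ be the sets of 1-1 and 1-2 matches produced by a feasible solution of the Matching 1-1/2 integer program with time-balance tolerance δ, i.e., satisfying |Σ_{I₁}(t_e − t_u) + Σ_{I₂}(t_e − (t_{u1}+t_{u2})/2)| ≤ δ(|I₁| + |I₂|). Suppose outcomes satisfy Y_t(e) = β_0 + β₁e + β₂t + ε_t with mean-zero errors. Writing D_1 = Σ_{I₁}(t_e − t_u) and D_2 = Σ_{I₂}(t_e − (t_{u1}+t_{u2})/2), the bias of the hybrid estimator equals β₂·(D₁ + D₂)/(|I₁|+|I₂|) and hence is bounded in absolute value by δ·|β₂|,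 regardless of how the matches are split between types. -/
open MeasureTheory

/-- Exact bias of the hybrid Matching 1-1/2 estimator under a linear-in-time outcome
model: the bias equals β₂·(D₁ + D₂)/(|I₁|+|I₂|) and hence is bounded by δ·|β₂| under the
combined time-balance constraint, regardless of how the matches are split between the
two types. -/
theorem matching112_exact_bias
    {Ω : Type*} [MeasurableSpace Ω] (μ : Measure Ω) [IsProbabilityMeasure μ]
    (I₁ : Finset (ℝ × ℝ)) (I₂ : Finset (ℝ × ℝ × ℝ))
    (hn : 0 < I₁.card + I₂.card)
    (β0 β1 β2 δ : ℝ)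
    (ε : ℝ → ℝ → Ω → ℝ)
    (hint : ∀ t e, Integrable (ε t e) μ)
    (hmean : ∀ t e, ∫ ω, ε t e ω ∂μ = 0)
    (Y : ℝ → ℝ → Ω → ℝ)
    (hY : ∀ t e ω, Y t e ω = β0 + β1 * e + β2 * t + ε t e ω)
    (hbal : |(∑ q ∈ I₁, (q.1 - q.2)) + ∑ q ∈ I₂, (q.1 - (q.2.1 + q.2.2) / 2)|
        ≤ δ * (I₁.card + I₂.card)) :
    ((∫ ω, ((I₁.card + I₂.card : ℕ) : ℝ)⁻¹ *
        ((∑ q ∈ I₁, (Y q.1 1 ω - Y q.2 0 ω))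
          + ∑ q ∈ I₂, (Y q.1 1 ω - (Y q.2.1 0 ω + Y q.2.2 0 ω) / 2)) ∂μ) - β1
      = β2 * ((∑ q ∈ I₁, (q.1 - q.2)) + ∑ q ∈ I₂, (q.1 - (q.2.1 + q.2.2) / 2))
          / (I₁.card + I₂.card))
    ∧ |(∫ ω, ((I₁.card + I₂.card : ℕ) : ℝ)⁻¹ *
        ((∑ q ∈ I₁, (Y q.1 1 ω - Y q.2 0 ω))
          + ∑ q ∈ I₂, (Y q.1 1 ω - (Y q.2.1 0 ω + Y q.2.2 0 ω) / 2)) ∂μ) - β1|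
      ≤ δ * |β2| := by
  set n : ℝ := ((I₁.card + I₂.card : ℕ) : ℝ) with hn'
  have hnpos : (0 : ℝ) < n := by rw [hn']; exact_mod_cast hn
  have hn0 : n ≠ 0 := ne_of_gt hnpos
  set D : ℝ := (∑ q ∈ I₁, (q.1 - q.2)) + ∑ q ∈ I₂, (q.1 - (q.2.1 + q.2.2) / 2) with hD
  set S : Ω → ℝ := fun ω =>
      (∑ q ∈ I₁, (ε q.1 1 ω - ε q.2 0 ω))
        + ∑ q ∈ I₂, (ε q.1 1 ω - (ε q.2.1 0 ω + ε q.2.2 0 ω) / 2) with hS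
  have hSint : Integrable S μ := by
    apply Integrable.add
    · exact integrable_finset_sum _ fun q _ => (hint q.1 1).sub (hint q.2 0)
    · exact integrable_finset_sum _ fun q _ =>
        (hint q.1 1).sub (((hint q.2.1 0).add (hint q.2.2 0)).div_const 2)
  have hSmean : ∫ ω, S ω ∂μ = 0 := by
    rw [hS]
    rw [integral_add (integrable_finset_sum _ fun q _ => (hint q.1 1).sub (hint q.2 0))
      (integrable_finset_sum _ fun q _ =>
        (hint q.1 1).sub (((hint q.2.1 0).add (hint q.2.2 0)).div_const 2)),
      integral_finset_sum _ fun q _ => (hint q.1 1).sub (hint q.2 0),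
      integral_finset_sum _ fun q _ =>
        (hint q.1 1).sub (((hint q.2.1 0).add (hint q.2.2 0)).div_const 2)]
    have h1 : ∀ q ∈ I₁, ∫ ω, (ε q.1 1 ω - ε q.2 0 ω) ∂μ = 0 := by
      intro q _
      rw [integral_sub (hint q.1 1) (hint q.2 0), hmean, hmean]; ring
    have h2 : ∀ q ∈ I₂,
        ∫ ω, (ε q.1 1 ω - (ε q.2.1 0 ω + ε q.2.2 0 ω) / 2) ∂μ = 0 := by
      intro q _
      have hI : Integrable (fun ω => (ε q.2.1 0 ω + ε q.2.2 0 ω) / 2) μ :=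
        ((hint q.2.1 0).add (hint q.2.2 0)).div_const 2
      rw [integral_sub (hint q.1 1) hI, hmean]
      have : ∫ ω, (ε q.2.1 0 ω + ε q.2.2 0 ω) / 2 ∂μ
          = (∫ ω, (ε q.2.1 0 ω + ε q.2.2 0 ω) ∂μ) / 2 := integral_div _ _
      rw [this, integral_add (hint q.2.1 0) (hint q.2.2 0), hmean, hmean]; ring
    rw [Finset.sum_congr rfl h1, Finset.sum_congr rfl h2]
    simp
  have hfun : ∀ ω, ((I₁.card + I₂.card : ℕ) : ℝ)⁻¹ *
        ((∑ q ∈ I₁, (Y q.1 1 ω - Y q.2 0 ω))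
          + ∑ q ∈ I₂, (Y q.1 1 ω - (Y q.2.1 0 ω + Y q.2.2 0 ω) / 2))
      = β1 + β2 * D / n + n⁻¹ * S ω := by
    intro ω
    have e1 : ∑ q ∈ I₁, (Y q.1 1 ω - Y q.2 0 ω)
        = ∑ q ∈ I₁, (β1 + β2 * (q.1 - q.2) + (ε q.1 1 ω - ε q.2 0 ω)) := by
      refine Finset.sum_congr rfl fun q _ => ?_
      rw [hY, hY]; ring
    have e2 : ∑ q ∈ I₂, (Y q.1 1 ω - (Y q.2.1 0 ω + Y q.2.2 0 ω) / 2)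
        = ∑ q ∈ I₂, (β1 + β2 * (q.1 - (q.2.1 + q.2.2) / 2)
            + (ε q.1 1 ω - (ε q.2.1 0 ω + ε q.2.2 0 ω) / 2)) := by
      refine Finset.sum_congr rfl fun q _ => ?_
      rw [hY, hY, hY]; ring
    have hA : (∑ q ∈ I₁, (Y q.1 1 ω - Y q.2 0 ω))
          + ∑ q ∈ I₂, (Y q.1 1 ω - (Y q.2.1 0 ω + Y q.2.2 0 ω) / 2)
        = n * β1 + β2 * D + S ω := by
      rw [e1, e2]
      simp only [Finset.sum_add_distrib, Finset.sum_const, nsmul_eq_mul, ← Finset.mul_sum]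
      rw [hS, hD, hn']
      push_cast
      ring
    rw [hA, ← hn']
    field_simp
  have hInt : (∫ ω, ((I₁.card + I₂.card : ℕ) : ℝ)⁻¹ *
        ((∑ q ∈ I₁, (Y q.1 1 ω - Y q.2 0 ω))
          + ∑ q ∈ I₂, (Y q.1 1 ω - (Y q.2.1 0 ω + Y q.2.2 0 ω) / 2)) ∂μ)
      = β1 + β2 * D / n := by
    calc (∫ ω, ((I₁.card + I₂.card : ℕ) : ℝ)⁻¹ *
        ((∑ q ∈ I₁, (Y q.1 1 ω - Y q.2 0 ω))
          + ∑ q ∈ I₂, (Y q.1 1 ω - (Y q.2.1 0 ω + Y q.2.2 0 ω) / 2)) ∂μ)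
        = ∫ ω, (β1 + β2 * D / n + n⁻¹ * S ω) ∂μ := by
          exact integral_congr_ae (Filter.Eventually.of_forall hfun)
      _ = (β1 + β2 * D / n) + n⁻¹ * ∫ ω, S ω ∂μ := by
          rw [integral_add (integrable_const _) (hSint.const_mul _),
            integral_const, integral_const_mul]
          simp
      _ = β1 + β2 * D / n := by rw [hSmean]; ring
  constructor
  · rw [hInt]; push_cast [hn']; ring
  · rw [hInt]
    have : β1 + β2 * D / n - β1 = β2 * D / n := by ring
    rw [this, abs_div, abs_mul, abs_of_pos hnpos, div_le_iff₀ hnpos]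
    calc |β2| * |D| ≤ |β2| * (δ * n) := by
          apply mul_le_mul_of_nonneg_left _ (abs_nonneg β2)
          calc |D| ≤ δ * (I₁.card + I₂.card) := hbal
            _ = δ * n := by push_cast [hn']; ring
      _ = δ * |β2| * n := by ring
end

section
/- Suppose potential outcomes have heterogeneous effects: Y_t(1) − Y_t(0) = τ_t for deterministic reals τ_t, and Y_t(0) = γ + ε_t with mean-zero errors. Let 𝒯_e* be the set of matched exposed periods under any of the matching schemes with imputation Y_t^imp(0) = average of matched unexposed outcomes. Then E[τ̂] = (1/|𝒯_e*|)·Σ_{t ∈ 𝒯_e*} τ_t; i.e., the matching estimator is unbiased for the average effect over the matched exposed periods, which may differ from the average effect over all exposed periods (1/|𝒯_e|)·Σ_{t ∈ 𝒯_e} τ_t whenever 𝒯_e* ⊊ 𝒯_e and the τ_t are non-constant. -/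
open MeasureTheory

/-- Under heterogeneous effects Y_t(1) − Y_t(0) = τ_t and a constant baseline
Y_t(0) = γ + ε_t with mean-zero errors, the matching estimator is unbiased for the
average effect over the matched exposed periods 𝒯_e* (a subset of the exposed periods). -/
theorem matching_unbiased_heterogeneous
    {Ω : Type*} [MeasurableSpace Ω] (μ : Measure Ω) [IsProbabilityMeasure μ]
    (Te Testar : Finset ℕ) (hsub : Testar ⊆ Te) (hne : Testar.Nonempty)
    (M : ℕ → Finset ℕ) (hM : ∀ t ∈ Testar, (M t).Nonempty)
    (τ : ℕ → ℝ) (γ : ℝ)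
    (ε : ℕ → Ω → ℝ)
    (hint : ∀ t, Integrable (ε t) μ)
    (hmean : ∀ t, ∫ ω, ε t ω ∂μ = 0)
    (Y0 : ℕ → Ω → ℝ) (hY0 : ∀ t ω, Y0 t ω = γ + ε t ω)
    (Y1 : ℕ → Ω → ℝ) (hY1 : ∀ t ω, Y1 t ω = Y0 t ω + τ t) :
    ∫ ω, (Testar.card : ℝ)⁻¹ *
        ∑ t ∈ Testar, (Y1 t ω - ((M t).card : ℝ)⁻¹ * ∑ u ∈ M t, Y0 u ω) ∂μ
      = (Testar.card : ℝ)⁻¹ * ∑ t ∈ Testar, τ t := by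
  have key : ∀ ω, ∀ t ∈ Testar,
      Y1 t ω - ((M t).card : ℝ)⁻¹ * ∑ u ∈ M t, Y0 u ω
        = τ t + (ε t ω - ((M t).card : ℝ)⁻¹ * ∑ u ∈ M t, ε u ω) := by
    intro ω t ht
    have hc : ((M t).card : ℝ) ≠ 0 := by
      exact_mod_cast (Finset.card_pos.mpr (hM t ht)).ne'
    simp only [hY1, hY0, Finset.sum_add_distrib, Finset.sum_const, nsmul_eq_mul]
    field_simp
    ring
  have hintg : ∀ t ∈ Testar, Integrable
      (fun ω => τ t + (ε t ω - ((M t).card : ℝ)⁻¹ * ∑ u ∈ M t, ε u ω)) μ := by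
    intro t _
    exact (integrable_const _).add ((hint t).sub
      (((integrable_finset_sum (M t) (fun u _ => hint u)).const_mul _)))
  calc ∫ ω, (Testar.card : ℝ)⁻¹ *
        ∑ t ∈ Testar, (Y1 t ω - ((M t).card : ℝ)⁻¹ * ∑ u ∈ M t, Y0 u ω) ∂μ
      = (Testar.card : ℝ)⁻¹ * ∫ ω, ∑ t ∈ Testar,
          (τ t + (ε t ω - ((M t).card : ℝ)⁻¹ * ∑ u ∈ M t, ε u ω)) ∂μ := by
        rw [← integral_const_mul]
        congr 1; funext ω; congr 1
        exact Finset.sum_congr rfl (key ω)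
    _ = (Testar.card : ℝ)⁻¹ * ∑ t ∈ Testar, ∫ ω,
          (τ t + (ε t ω - ((M t).card : ℝ)⁻¹ * ∑ u ∈ M t, ε u ω)) ∂μ := by
        rw [integral_finset_sum _ hintg]
    _ = (Testar.card : ℝ)⁻¹ * ∑ t ∈ Testar, τ t := by
        congr 1
        refine Finset.sum_congr rfl fun t ht => ?_
        have h1 : Integrable (fun ω => ((M t).card : ℝ)⁻¹ * ∑ u ∈ M t, ε u ω) μ :=
          (integrable_finset_sum (M t) (fun u _ => hint u)).const_mul _
        have h2 : Integrable (fun ω => ε t ω - ((M t).card : ℝ)⁻¹ * ∑ u ∈ M t, ε u ω) μ :=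
          (hint t).sub h1
        rw [integral_add (f := fun _ => τ t)
            (g := fun ω => ε t ω - ((M t).card : ℝ)⁻¹ * ∑ u ∈ M t, ε u ω)
            (integrable_const _) h2,
          integral_sub (hint t) h1, hmean t, integral_const_mul,
          integral_finset_sum _ (fun u _ => hint u)]
        simp [hmean]
end
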